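/- Let V ⊂ ℝ² be a finite point set that contains a Zeno configuration of size k (for some scale u > 0 and center x). Then I(V) ≥ √(k − 1); that is, every connected graph G on vertex set V has a vertex y ∈ V with I(y,G) ≥ √(k − 1). -/

import Mathlib

open MeasureTheory Filter
open scoped Classical

noncomputable section

/-- Points in `d`-dimensional Euclidean space. -/
abbrev Pt (d : ℕ) : Type := EuclideanSpace ℝ (Fin d)

/-- The transmission radius of vertex `i` in the graph `G` on the points `x`:
the distance to its furthest neighbour (`0` if `i` is isolated). -/
noncomputable def rad {d n : ℕ} (x : Fin n → Pt d) (G : SimpleGraph (Fin n)) (i : Fin n) : ℝ :=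
  ((Finset.univ.filter fun j => G.Adj i j).sup fun j =>
    (⟨dist (x i) (x j), dist_nonneg⟩ : NNReal) : NNReal)

/-- The interference at a point `p` caused by the graph `G` on the points `x`:
the number of balls `B(x i, rad x G i)` containing `p`. -/
noncomputable def interAt {d n : ℕ} (x : Fin n → Pt d) (G : SimpleGraph (Fin n)) (p : Pt d) : ℕ :=
  (Finset.univ.filter fun i => dist p (x i) ≤ rad x G i).card

/-- The (maximum receiver-centric) interference of `G`:
the maximum interference at a vertex. -/
noncomputable def interG {d n : ℕ} (x : Fin n → Pt d) (G : SimpleGraph (Fin n)) : ℕ :=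
  Finset.univ.sup fun i => interAt x G (x i)

/-- Total Euclidean edge length of `G` on the points `x`. -/
noncomputable def tlen {d n : ℕ} (x : Fin n → Pt d) (G : SimpleGraph (Fin n)) : ℝ :=
  ∑ e ∈ G.edgeFinset, Sym2.lift ⟨fun i j => dist (x i) (x j), fun i j => dist_comm _ _⟩ e

/-- `G` is a minimum spanning tree of the points `x`: a connected graph on the
vertex set of minimum total Euclidean edge length. -/
def IsMST {d n : ℕ} (x : Fin n → Pt d) (G : SimpleGraph (Fin n)) : Prop :=
  G.Connected ∧ ∀ H : SimpleGraph (Fin n), H.Connected → tlen x G ≤ tlen x H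

/-- The center of the `i`-th small ball of a Zeno configuration with scale `u`
centered at `x`: the point `x + (u * 3 ^ i, 0)` for `i ≥ 1`, and `x` itself for `i = 0`. -/
noncomputable def zenoCenter (x : Pt 2) (u : ℝ) (i : ℕ) : Pt 2 :=
  if i = 0 then x else x + EuclideanSpace.single (0 : Fin 2) (u * 3 ^ i)

/-- The point family `p` contains a Zeno configuration of size `k` with scale `u > 0`
centered at `x`: there are `k` points, one in each closed ball `D i` of radius `u`
centered at `zenoCenter x u i`, and the big closed ball `D` of radius `u * 3 ^ k`
centered at `x` contains no other points of the family. -/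
def ContainsZeno {n : ℕ} (p : Fin n → Pt 2) (k : ℕ) (u : ℝ) (x : Pt 2) : Prop :=
  0 < u ∧ ∃ f : Fin k → Fin n, Function.Injective f ∧
    (∀ i : Fin k, dist (p (f i)) (zenoCenter x u (i : ℕ)) ≤ u) ∧
    (∀ j : Fin n, dist (p j) x ≤ u * 3 ^ k → ∃ i : Fin k, j = f i)

lemma rad_nonneg' {d n : ℕ} (x : Fin n → Pt d) (G : SimpleGraph (Fin n)) (i : Fin n) :
    0 ≤ rad x G i := NNReal.coe_nonneg _

lemma dist_le_rad {d n : ℕ} (x : Fin n → Pt d) (G : SimpleGraph (Fin n)) {i j : Fin n}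
    (h : G.Adj i j) : dist (x j) (x i) ≤ rad x G i := by
  rw [dist_comm]
  have := Finset.le_sup (f := fun j => (⟨dist (x i) (x j), dist_nonneg⟩ : NNReal))
      (Finset.mem_filter.mpr ⟨Finset.mem_univ j, h⟩)
  exact_mod_cast this

lemma card_le_interAt {d n : ℕ} (x : Fin n → Pt d) (G : SimpleGraph (Fin n)) (pt : Pt d)
    (C : Finset (Fin n)) (h : ∀ i ∈ C, dist pt (x i) ≤ rad x G i) :
    C.card ≤ interAt x G pt :=
  Finset.card_le_card fun i hi => Finset.mem_filter.mpr ⟨Finset.mem_univ _, h i hi⟩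

lemma zenoCenter_zero (x : Pt 2) (u : ℝ) : zenoCenter x u 0 = x := by simp [zenoCenter]

lemma zenoCenter_dist (x : Pt 2) {u : ℝ} (hu : 0 < u) {i : ℕ} (hi : i ≠ 0) :
    dist (zenoCenter x u i) x = u * 3 ^ i := by
  rw [zenoCenter, if_neg hi, dist_self_add_left]
  rw [(EuclideanSpace.norm_single 0 (u * 3 ^ i)).trans (Real.norm_eq_abs _)]
  exact abs_of_nonneg (by positivity)

lemma zenoCenter_dist' (x : Pt 2) {u : ℝ} (hu : 0 < u) {i j : ℕ} (hi : i ≠ 0) (hj : j ≠ 0) :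
    dist (zenoCenter x u i) (zenoCenter x u j) = |u * 3 ^ i - u * 3 ^ j| := by
  rw [zenoCenter, if_neg hi, zenoCenter, if_neg hj, dist_add_left,
    EuclideanSpace.dist_single_same, Real.dist_eq]

/-- If a point set in `ℝ²` contains a Zeno configuration of size `k`, then every
connected graph on the point set has a vertex with interference at least `√(k - 1)`. -/
theorem zeno_interference (n k : ℕ) (hk : 0 < k) (p : Fin n → Pt 2)
    (hp : Function.Injective p) (u : ℝ) (hu : 0 < u) (x : Pt 2)
    (f : Fin k → Fin n) (hf : Function.Injective f)
    (hin : ∀ i : Fin k, dist (p (f i)) (zenoCenter x u (i : ℕ)) ≤ u)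
    (hout : ∀ j : Fin n, dist (p j) x ≤ u * 3 ^ k → ∃ i : Fin k, j = f i)
    (G : SimpleGraph (Fin n)) (hG : G.Connected) :
    ∃ i : Fin n, Real.sqrt ((k : ℝ) - 1) ≤ (interAt p G (p i) : ℝ) := by
  obtain ⟨i₀, -, hmax⟩ := Finset.exists_max_image Finset.univ
    (fun i => interAt p G (p i)) ⟨f ⟨0, hk⟩, Finset.mem_univ _⟩
  refine ⟨i₀, ?_⟩
  set t := interAt p G (p i₀) with ht
  have hmax' : ∀ i : Fin n, interAt p G (p i) ≤ t := fun i => hmax i (Finset.mem_univ i)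
  suffices hkt : k - 1 ≤ t * t by
    have h1 : ((k : ℝ) - 1) ≤ (t : ℝ) * t := by
      have h1 : ((k - 1 : ℕ) : ℝ) ≤ ((t * t : ℕ) : ℝ) := Nat.cast_le.mpr hkt
      rw [Nat.cast_sub hk] at h1
      push_cast at h1 ⊢
      linarith
    calc Real.sqrt ((k : ℝ) - 1) ≤ Real.sqrt ((t : ℝ) * t) := Real.sqrt_le_sqrt h1
    _ = t := Real.sqrt_mul_self (Nat.cast_nonneg t)
  rcases le_or_gt k 1 with hk1 | h1k
  · omega
  -- main case : k ≥ 2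
  set z0 : Fin k := ⟨0, hk⟩ with hz0
  set z1 : Fin k := ⟨1, h1k⟩ with hz1
  have h3pow : ∀ a b : ℕ, a ≤ b → (3:ℝ) ^ a ≤ 3 ^ b :=
    fun a b h => pow_le_pow_right₀ (by norm_num) h
  -- distance estimates
  have hQx : ∀ i : Fin k, dist (p (f i)) x ≤ u * 3 ^ (i : ℕ) + u := by
    intro i
    have h1 := dist_triangle (p (f i)) (zenoCenter x u (i : ℕ)) x
    have h2 := hin i
    rcases eq_or_ne (i : ℕ) 0 with h | h
    · rw [h, zenoCenter_zero] at h2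
      rw [h]
      norm_num
      nlinarith
    · rw [zenoCenter_dist x hu h] at h1
      linarith
  have hQQ_ub : ∀ i j : Fin k,
      dist (p (f i)) (p (f j)) ≤ dist (zenoCenter x u (i:ℕ)) (zenoCenter x u (j:ℕ)) + (u + u) := by
    intro i j
    have h1 := dist_triangle4 (p (f i)) (zenoCenter x u (i:ℕ)) (zenoCenter x u (j:ℕ)) (p (f j))
    have h2 := hin i
    have h3 := hin j
    rw [dist_comm (zenoCenter x u (j:ℕ)) (p (f j))] at h1
    linarith
  have hQQ_lb : ∀ i j : Fin k,
      dist (zenoCenter x u (i:ℕ)) (zenoCenter x u (j:ℕ)) - (u + u) ≤ dist (p (f i)) (p (f j)) := by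
    intro i j
    have h1 := dist_triangle4 (zenoCenter x u (i:ℕ)) (p (f i)) (p (f j)) (zenoCenter x u (j:ℕ))
    have h2 := hin i
    have h3 := hin j
    rw [dist_comm (zenoCenter x u (i:ℕ)) (p (f i))] at h1
    linarith
  have hfar : ∀ v : Fin n, (∀ i : Fin k, v ≠ f i) → u * 3 ^ k < dist (p v) x := by
    intro v hv
    by_contra h
    push_neg at h
    obtain ⟨i, hi⟩ := hout v h
    exact hv i hi
  -- every vertex has a neighbour
  have hne01 : f z0 ≠ f z1 := by
    intro h
    have := hf h
    rw [hz0, hz1] at this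
    exact absurd (congrArg Fin.val this) (by simp)
  have hnbr : ∀ v : Fin n, ∃ w, G.Adj v w := by
    intro v
    obtain ⟨v', hv'⟩ : ∃ v', v' ≠ v := by
      rcases eq_or_ne (f z0) v with h | h
      · exact ⟨f z1, by rw [← h]; exact fun hh => hne01 hh.symm⟩
      · exact ⟨f z0, h⟩
    obtain ⟨w⟩ := hG.preconnected v v'
    cases w with
    | nil => exact absurd rfl hv'
    | cons h _ => exact ⟨_, h⟩
  -- key distance bound: q1 to q_w
  have key1 : ∀ w : Fin k, (w : ℕ) ≠ 0 →
      dist (p (f z1)) (p (f w)) ≤ u * 3 ^ (w:ℕ) - u := by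
    intro w hw
    have h1 := hQQ_ub z1 w
    have hz1v : ((z1 : Fin k) : ℕ) = 1 := rfl
    rw [hz1v, zenoCenter_dist' x hu one_ne_zero hw] at h1
    have hw1 : 1 ≤ (w : ℕ) := Nat.one_le_iff_ne_zero.mpr hw
    have h3w : (3:ℝ) ≤ 3 ^ (w:ℕ) := by simpa using h3pow 1 (w:ℕ) hw1
    have habs : |u * 3 ^ (1:ℕ) - u * 3 ^ (w:ℕ)| = u * 3 ^ (w:ℕ) - u * 3 ^ (1:ℕ) := by
      rw [abs_sub_comm, abs_of_nonneg]
      nlinarith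
    rw [habs] at h1
    norm_num at h1 ⊢
    linarith
  -- radius lower bound for rightward-edged chain nodes
  have hradW : ∀ w : Fin k, (w : ℕ) ≠ 0 →
      ∀ v : Fin n, G.Adj (f w) v → (∀ i : Fin k, v = f i → w ≤ i) →
      u * (2 * 3 ^ (w:ℕ) - 2) ≤ rad p G (f w) := by
    intro w hw v hadj hvi
    have hwk : (w : ℕ) + 1 ≤ k := w.isLt
    by_cases hvf : ∃ i : Fin k, v = f i
    · obtain ⟨i, rfl⟩ := hvf
      have hwi : w ≤ i := hvi i rfl
      have hne : w ≠ i := fun h => G.irrefl (h ▸ hadj)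
      have hlt : (w:ℕ) + 1 ≤ (i:ℕ) := by
        have := lt_of_le_of_ne hwi hne
        rw [Fin.lt_def] at this
        omega
      have h1 : dist (p (f i)) (p (f w)) ≤ rad p G (f w) := dist_le_rad p G hadj
      have h2 := hQQ_lb i w
      have hi0 : (i : ℕ) ≠ 0 := by omega
      rw [zenoCenter_dist' x hu hi0 hw] at h2
      have h3 : (3:ℝ) ^ ((w:ℕ)+1) ≤ 3 ^ (i:ℕ) := h3pow _ _ hlt
      have habs : |u * 3 ^ (i:ℕ) - u * 3 ^ (w:ℕ)| = u * 3 ^ (i:ℕ) - u * 3 ^ (w:ℕ) := by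
        rw [abs_of_nonneg]
        have := h3pow (w:ℕ) (i:ℕ) (by omega)
        nlinarith
      rw [habs] at h2
      have hp3 : (3:ℝ) ^ ((w:ℕ)+1) = 3 * 3 ^ (w:ℕ) := by ring
      nlinarith
    · push_neg at hvf
      have h1 : u * 3 ^ k < dist (p v) x := hfar v hvf
      have h2 : dist (p v) (p (f w)) ≤ rad p G (f w) := dist_le_rad p G hadj
      have h3 := dist_triangle (p v) (p (f w)) x
      have h4 := hQx w
      have h5 : (3:ℝ) ^ ((w:ℕ)+1) ≤ 3 ^ k := h3pow _ _ hwk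
      have hp3 : (3:ℝ) ^ ((w:ℕ)+1) = 3 * 3 ^ (w:ℕ) := by ring
      nlinarith
  -- the set W of chain nodes with a rightward edge
  set W : Finset (Fin k) := Finset.univ.filter
    (fun w => w ≠ z0 ∧ ∃ v, G.Adj (f w) v ∧ ∀ i : Fin k, v = f i → w ≤ i) with hW
  have hval0 : ∀ w : Fin k, w ≠ z0 ↔ (w : ℕ) ≠ 0 := by
    intro w
    rw [hz0]
    constructor
    · intro h h'
      exact h (Fin.ext h')
    · intro h h'
      exact h (by rw [h'])
  have hWcov : ∀ w ∈ W, dist (p (f z1)) (p (f w)) ≤ rad p G (f w) := by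
    intro w hw
    obtain ⟨-, hw0, v, hadj, hvi⟩ := Finset.mem_filter.mp hw
    have hw0' : (w : ℕ) ≠ 0 := (hval0 w).mp hw0
    have h1 := key1 w hw0'
    have h2 := hradW w hw0' v hadj hvi
    have h3 : (1:ℝ) ≤ 3 ^ (w:ℕ) := by simpa using h3pow 0 (w:ℕ) (Nat.zero_le _)
    nlinarith
  -- the ball of q0 covers q1
  have h0cov : dist (p (f z1)) (p (f z0)) ≤ rad p G (f z0) := by
    obtain ⟨v, hadj⟩ := hnbr (f z0)
    have hz0v : ((z0 : Fin k) : ℕ) = 0 := rfl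
    have hd01 : dist (p (f z1)) (p (f z0)) ≤ u * 3 + (u + u) := by
      have h1 := hQQ_ub z1 z0
      rw [show ((z1 : Fin k) : ℕ) = 1 from rfl, hz0v, zenoCenter_zero,
        zenoCenter_dist x hu one_ne_zero] at h1
      norm_num at h1
      linarith
    have hQ0x : dist (p (f z0)) x ≤ u := by
      have := hin z0
      rwa [hz0v, zenoCenter_zero] at this
    by_cases hvf : ∃ i : Fin k, v = f i
    · obtain ⟨i, rfl⟩ := hvf
      rcases eq_or_ne i z1 with rfl | hi1
      · exact dist_le_rad p G hadj
      · have hi0 : i ≠ z0 := fun h => G.irrefl (by rwa [h] at hadj)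
        have hi2 : 2 ≤ (i : ℕ) := by
          have a0 : (i:ℕ) ≠ 0 := (hval0 i).mp hi0
          have a1 : (i:ℕ) ≠ 1 := fun h => hi1 (Fin.ext h)
          omega
        have h1 : dist (p (f i)) (p (f z0)) ≤ rad p G (f z0) := dist_le_rad p G hadj
        have h2 := hQQ_lb i z0
        rw [hz0v, zenoCenter_zero, zenoCenter_dist x hu ((hval0 i).mp hi0)] at h2
        have h3 : (9:ℝ) ≤ 3 ^ (i:ℕ) := by
          have := h3pow 2 (i:ℕ) hi2
          norm_num at this
          linarith
        nlinarith
    · push_neg at hvf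
      have h1 : u * 3 ^ k < dist (p v) x := hfar v hvf
      have h2 : dist (p v) (p (f z0)) ≤ rad p G (f z0) := dist_le_rad p G hadj
      have h3 := dist_triangle (p v) (p (f z0)) x
      have h5 : (9:ℝ) ≤ 3 ^ k := by
        have := h3pow 2 k h1k
        norm_num at this
        linarith
      nlinarith

  -- pointer function for leftward nodes
  have hcex : ∀ j : Fin k, j ≠ z0 → j ∉ W → ∃ i : Fin k, i < j ∧ G.Adj (f j) (f i) := by
    intro j hj0 hjW
    obtain ⟨v, hadj⟩ := hnbr (f j)
    have hnot : ¬(j ≠ z0 ∧ ∃ v, G.Adj (f j) v ∧ ∀ i : Fin k, v = f i → j ≤ i) := by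
      intro hcon
      exact hjW (Finset.mem_filter.mpr ⟨Finset.mem_univ _, hcon⟩)
    push_neg at hnot
    obtain ⟨i, rfl, hij⟩ := hnot hj0 v hadj
    exact ⟨i, hij, hadj⟩
  set c : Fin k → Fin k := fun j =>
    if h : ∃ i : Fin k, i < j ∧ G.Adj (f j) (f i) then h.choose else z0 with hc
  have hcspec : ∀ j : Fin k, j ≠ z0 → j ∉ W → c j < j ∧ G.Adj (f j) (f (c j)) := by
    intro j hj0 hjW
    have hex := hcex j hj0 hjW
    simp only [hc, dif_pos hex]
    exact hex.choose_spec
  set NW := Finset.univ.filter (fun j : Fin k => j ≠ z0 ∧ j ∉ W) with hNW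
  have hcmem : ∀ j : Fin k, j ∈ NW → c j ∈ insert z0 W := by
    intro j hj
    obtain ⟨-, hj0, hjW⟩ := Finset.mem_filter.mp hj
    obtain ⟨hlt, hadj⟩ := hcspec j hj0 hjW
    rcases eq_or_ne (c j) z0 with h | h
    · rw [h]; exact Finset.mem_insert_self _ _
    · refine Finset.mem_insert_of_mem (Finset.mem_filter.mpr
        ⟨Finset.mem_univ _, h, f j, hadj.symm, ?_⟩)
      intro i hi
      have hji : j = i := hf hi
      rw [← hji]
      exact hlt.le
  have hz0W : z0 ∉ W := fun h => ((Finset.mem_filter.mp h).2.1) rfl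
  have hWsub : W ⊆ Finset.univ.filter (fun j : Fin k => j ≠ z0) := by
    intro w hw
    exact Finset.mem_filter.mpr ⟨Finset.mem_univ _, (Finset.mem_filter.mp hw).2.1⟩
  have hNWeq : NW = (Finset.univ.filter (fun j : Fin k => j ≠ z0)) \ W := by
    ext j
    simp only [hNW, Finset.mem_filter, Finset.mem_sdiff, Finset.mem_univ, true_and]
  have hcard1 : (Finset.univ.filter (fun j : Fin k => j ≠ z0)).card = k - 1 := by
    rw [Finset.filter_ne', Finset.card_erase_of_mem (Finset.mem_univ _), Finset.card_univ,
      Fintype.card_fin]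
  have hsplit : W.card + NW.card = k - 1 := by
    have h2 := Finset.card_le_card hWsub
    rw [hNWeq, Finset.card_sdiff_of_subset hWsub, hcard1]
    rw [hcard1] at h2
    omega
  have hfib : NW.card = ∑ w ∈ insert z0 W, (NW.filter (fun j => c j = w)).card :=
    Finset.card_eq_sum_card_fiberwise hcmem
  have hfibb : ∀ w ∈ insert z0 W, (NW.filter (fun j => c j = w)).card + 1 ≤ t := by
    intro w hw
    have hcov : ∀ i ∈ insert (f w) ((NW.filter (fun j => c j = w)).image f),
        dist (p (f w)) (p i) ≤ rad p G i := by
      intro i hi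
      rcases Finset.mem_insert.mp hi with rfl | hi
      · rw [dist_self]; exact rad_nonneg' p G _
      · obtain ⟨j, hjP, rfl⟩ := Finset.mem_image.mp hi
        obtain ⟨hjNW, hcj⟩ := Finset.mem_filter.mp hjP
        obtain ⟨-, hj0, hjW⟩ := Finset.mem_filter.mp hjNW
        have hadj := (hcspec j hj0 hjW).2
        rw [hcj] at hadj
        exact dist_le_rad p G hadj
    have hcard := card_le_interAt p G (p (f w)) _ hcov
    have hnotmem : f w ∉ (NW.filter (fun j => c j = w)).image f := by
      intro hmem
      obtain ⟨j, hjP, hje⟩ := Finset.mem_image.mp hmem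
      have hjw : j = w := hf hje
      obtain ⟨hjNW, -⟩ := Finset.mem_filter.mp hjP
      obtain ⟨-, hj0, hjW⟩ := Finset.mem_filter.mp hjNW
      rcases Finset.mem_insert.mp hw with rfl | hwW
      · exact hj0 hjw
      · exact hjW (hjw ▸ hwW)
    rw [Finset.card_insert_of_notMem hnotmem,
      Finset.card_image_of_injective _ hf] at hcard
    exact hcard.trans (hmax' _)
  have hWb : W.card + 1 ≤ t := by
    have hcov : ∀ i ∈ insert (f z0) (W.image f), dist (p (f z1)) (p i) ≤ rad p G i := by
      intro i hi
      rcases Finset.mem_insert.mp hi with rfl | hi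
      · exact h0cov
      · obtain ⟨w, hwW, rfl⟩ := Finset.mem_image.mp hi
        exact hWcov w hwW
    have hcard := card_le_interAt p G (p (f z1)) _ hcov
    have hnotmem : f z0 ∉ W.image f := by
      intro hmem
      obtain ⟨w, hwW, hwe⟩ := Finset.mem_image.mp hmem
      exact ((Finset.mem_filter.mp hwW).2.1) (hf hwe)
    rw [Finset.card_insert_of_notMem hnotmem, Finset.card_image_of_injective _ hf] at hcard
    exact hcard.trans (hmax' _)
  have hNWb : NW.card ≤ (W.card + 1) * (t - 1) := by
    rw [hfib]
    calc ∑ w ∈ insert z0 W, (NW.filter (fun j => c j = w)).card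
        ≤ ∑ _w ∈ insert z0 W, (t - 1) :=
          Finset.sum_le_sum (fun w hw => by have := hfibb w hw; omega)
      _ = (insert z0 W).card * (t - 1) := by rw [Finset.sum_const, smul_eq_mul]
      _ = (W.card + 1) * (t - 1) := by rw [Finset.card_insert_of_notMem hz0W]
  have hfin : k - 1 ≤ (t - 1) + t * (t - 1) := by
    calc k - 1 = W.card + NW.card := hsplit.symm
      _ ≤ (t - 1) + (W.card + 1) * (t - 1) := Nat.add_le_add (by omega) hNWb
      _ ≤ (t - 1) + t * (t - 1) := Nat.add_le_add_left (Nat.mul_le_mul_right _ hWb) _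
  have htt : (t - 1) + t * (t - 1) ≤ t * t := by
    obtain ⟨e, he⟩ : ∃ e, t = e + 1 := ⟨t - 1, by omega⟩
    rw [he]
    simp only [Nat.add_sub_cancel]
    nlinarith
  exact hfin.trans htt
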